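/- The discrete homogeneous powers approximate the powers of the vector variable: for every x ∈ ℝⁿ, every s ∈ ℕ, and each sign choice, H_s^±(x; h) → x^s in Cl_{0,n} as h → 0⁺, where x^s is the s-th power of the Clifford vector x = Σ_{i=1}^n x_i e_i; equivalently, H_{2k}^±(x;h) → (−1)^k |x|^{2k} and H_{2k+1}^±(x;h) → (−1)^k |x|^{2k} Σ_i x_i e_i. -/

import Mathlib

open Finset

noncomputable section

/-- The quadratic form on `ℝⁿ` whose Clifford algebra is `Cl_{0,n}`:
`Q(x) = −(x₁² + ⋯ + xₙ²)`, so that the generators satisfy `eᵢeⱼ + eⱼeᵢ = −2δᵢⱼ`. -/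
def negQ (n : ℕ) : QuadraticForm ℝ (Fin n → ℝ) :=
  QuadraticMap.weightedSumSquares ℝ (fun _ : Fin n => (-1 : ℝ))

/-- The Clifford algebra `Cl_{0,n}`. -/
abbrev Cl (n : ℕ) := CliffordAlgebra (negQ n)

/-- The generators `e i` of `Cl_{0,n}`. -/
def eCl (n : ℕ) (i : Fin n) : Cl n := CliffordAlgebra.ι (negQ n) (Pi.single i 1)

/-- `1` for the upper sign choice, `-1` for the lower one. -/
def sgn (σ : Bool) : ℝ := if σ then 1 else -1

/-- Multi-index factorial power `(x)_∓^{(α)} = ∏ᵢ ∏_{k=0}^{αᵢ-1}(xᵢ ∓ k h)` at a real point. -/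
def mfpR {n : ℕ} (σ : Bool) (h : ℝ) (x : Fin n → ℝ) (α : Fin n → ℕ) : ℝ :=
  ∏ i, ∏ k ∈ range (α i), (x i - sgn σ * k * h)

/-- The Clifford vector `x = Σᵢ xᵢ eᵢ`. -/
def vecR (n : ℕ) (x : Fin n → ℝ) : Cl n := ∑ i, x i • eCl n i

/-- The discrete homogeneous powers `H_s^±(x; h)` evaluated at a real point `x` with
mesh width `h`. -/
def HpowR (n : ℕ) (σ : Bool) (h : ℝ) (s : ℕ) (x : Fin n → ℝ) : Cl n :=
  if s % 2 = 0 then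
    algebraMap ℝ (Cl n) (∑ α ∈ Finset.Nat.antidiagonalTuple n (s / 2),
      ((-1 : ℝ) ^ (s / 2) * (Nat.factorial (s / 2) : ℝ) / (∏ i, (Nat.factorial (α i) : ℝ)))
        * mfpR σ h x (fun j => 2 * α j))
  else
    ∑ α ∈ Finset.Nat.antidiagonalTuple n (s / 2), ∑ i,
      (((-1 : ℝ) ^ (s / 2) * (Nat.factorial (s / 2) : ℝ) / (∏ j, (Nat.factorial (α j) : ℝ)))
          * mfpR σ h x (fun j => 2 * α j + if j = i then 1 else 0)) • eCl n i

lemma mfpR_zero {n : ℕ} (σ : Bool) (x : Fin n → ℝ) (α : Fin n → ℕ) :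
    mfpR σ 0 x α = ∏ i, x i ^ α i := by
  simp [mfpR]

lemma mfpR_continuous {n : ℕ} (σ : Bool) (x : Fin n → ℝ) (α : Fin n → ℕ) :
    Continuous (fun h : ℝ => mfpR σ h x α) := by
  unfold mfpR; fun_prop

lemma vecR_eq_iota (n : ℕ) (x : Fin n → ℝ) : vecR n x = CliffordAlgebra.ι (negQ n) x := by
  unfold vecR eCl
  simp_rw [← LinearMap.map_smul, ← map_sum]
  congr 1
  ext j
  simp [Pi.single_apply]

lemma vecR_sq (n : ℕ) (x : Fin n → ℝ) :
    vecR n x ^ 2 = algebraMap ℝ (Cl n) (-∑ i, x i ^ 2) := by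
  rw [vecR_eq_iota, sq, CliffordAlgebra.ι_sq_scalar]
  congr 1
  simp [negQ, QuadraticMap.weightedSumSquares_apply, sq]

lemma multinom_sum (n k : ℕ) (y : Fin n → ℝ) :
    ∑ α ∈ Finset.Nat.antidiagonalTuple n k,
      ((Nat.factorial k : ℝ) / (∏ i, (Nat.factorial (α i) : ℝ))) * ∏ i, y i ^ α i
      = (∑ i, y i) ^ k := by
  rw [Finset.sum_pow_eq_sum_piAntidiag, Finset.piAntidiag_univ_fin_eq_antidiagonalTuple]
  refine Finset.sum_congr rfl fun α hα => ?_
  have hsum : ∑ i, α i = k := (Finset.Nat.mem_antidiagonalTuple.mp hα)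
  have hfac : (∏ i, (Nat.factorial (α i) : ℝ)) ≠ 0 :=
    Finset.prod_ne_zero_iff.mpr fun i _ => Nat.cast_ne_zero.mpr (Nat.factorial_ne_zero _)
  have hspec := Nat.multinomial_spec Finset.univ α
  rw [hsum] at hspec
  have : (Nat.factorial k : ℝ) = (∏ i, (Nat.factorial (α i) : ℝ)) * (Nat.multinomial Finset.univ α : ℝ) := by
    rw [← Nat.cast_prod, ← Nat.cast_mul, hspec]
  rw [this]
  field_simp

lemma vecR_pow_even (n k : ℕ) (x : Fin n → ℝ) :
    vecR n x ^ (2 * k) = algebraMap ℝ (Cl n) ((-1) ^ k * (∑ i, x i ^ 2) ^ k) := by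
  rw [pow_mul, vecR_sq, ← map_pow, neg_pow]

lemma HpowR_zero_eq (n : ℕ) (σ : Bool) (x : Fin n → ℝ) (s : ℕ) :
    HpowR n σ 0 s x = vecR n x ^ s := by
  have key := multinom_sum n (s / 2) (fun i => x i ^ 2)
  obtain ⟨k, rfl | rfl⟩ := Nat.even_or_odd' s
  · have h1 : 2 * k % 2 = 0 := by omega
    have h2 : 2 * k / 2 = k := by omega
    rw [HpowR, if_pos h1, h2, vecR_pow_even]
    rw [h2] at key
    congr 1
    rw [← key, Finset.mul_sum]
    refine Finset.sum_congr rfl fun α hα => ?_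
    rw [mfpR_zero]
    simp_rw [pow_mul]
    ring
  · have h1 : ¬ (2 * k + 1) % 2 = 0 := by omega
    have h2 : (2 * k + 1) / 2 = k := by omega
    rw [HpowR, if_neg h1, h2, pow_succ, vecR_pow_even]
    rw [h2] at key
    conv_rhs => rw [vecR]
    rw [Finset.mul_sum, Finset.sum_comm]
    refine Finset.sum_congr rfl fun i _ => ?_
    rw [← Algebra.smul_def, smul_smul, ← Finset.sum_smul]
    congr 1
    have hterm : ∀ α ∈ Finset.Nat.antidiagonalTuple n k,
        ((-1 : ℝ) ^ k * (Nat.factorial k : ℝ) / (∏ j, (Nat.factorial (α j) : ℝ)))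
            * mfpR σ 0 x (fun j => 2 * α j + if j = i then 1 else 0)
          = ((-1 : ℝ) ^ k * x i) *
            (((Nat.factorial k : ℝ) / (∏ j, (Nat.factorial (α j) : ℝ))) * ∏ j, (x j ^ 2) ^ α j) := by
      intro α hα
      rw [mfpR_zero]
      have : (∏ j, x j ^ (2 * α j + if j = i then 1 else 0))
          = (∏ j, (x j ^ 2) ^ α j) * x i := by
        simp_rw [pow_add, pow_mul]
        rw [Finset.prod_mul_distrib]
        congr 1
        simp [pow_ite, Finset.prod_ite_eq']
      rw [this]
      ring
    rw [Finset.sum_congr rfl hterm, ← Finset.mul_sum, key]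
    ring

/-- The discrete homogeneous powers approximate the powers of the vector variable:
`H_s^±(x; h) → x^s` in `Cl_{0,n}` (with its canonical topology as a finite-dimensional
real module) as `h → 0⁺`. -/
theorem Hpow_tendsto_vector_power (n : ℕ) (hn : 1 ≤ n) (σ : Bool)
    (x : Fin n → ℝ) (s : ℕ) :
    letI : TopologicalSpace (Cl n) := moduleTopology ℝ (Cl n)
    Filter.Tendsto (fun h : ℝ => HpowR n σ h s x) (nhdsWithin 0 (Set.Ioi 0))
      (nhds (vecR n x ^ s)) := by
  letI : TopologicalSpace (Cl n) := moduleTopology ℝ (Cl n)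
  haveI : IsModuleTopology ℝ (Cl n) := ⟨rfl⟩
  haveI : ContinuousSMul ℝ (Cl n) := IsModuleTopology.toContinuousSMul ℝ (Cl n)
  haveI : ContinuousAdd (Cl n) := IsModuleTopology.toContinuousAdd ℝ (Cl n)
  have hcont : Continuous (fun h : ℝ => HpowR n σ h s x) := by
    unfold HpowR
    by_cases hs : s % 2 = 0
    · simp only [if_pos hs, Algebra.algebraMap_eq_smul_one]
      exact (continuous_finset_sum _ fun α _ =>
        continuous_const.fun_mul (mfpR_continuous σ x _)).fun_smul continuous_const
    · simp only [if_neg hs]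
      exact continuous_finset_sum _ fun α _ => continuous_finset_sum _ fun i _ =>
        (continuous_const.fun_mul (mfpR_continuous σ x _)).fun_smul continuous_const
  rw [← HpowR_zero_eq n σ x s]
  exact (hcont.tendsto 0).mono_left nhdsWithin_le_nhds
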